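/- Let B be a group with free presentation 0 → K → P → B → 0 (P free, K = ker of the projection). Define T_P = {p ∈ P | ∃ n > 0, pⁿ ∈ [P,P]} and T_K = {p ∈ K | ∃ n > 0, pⁿ ∈ [K,P]}. Then T_K is a normal subgroup of the group K ⊓ T_P. -/

import Mathlib

open scoped commutatorElement

/-- Auxiliary subgroup: elements of `K` with some positive power in `N`,
where `N` is normal and contains all commutators of elements of `K`. -/
def torsSub {P : Type*} [Group P] (K N : Subgroup P) [hN : N.Normal]
    (hc : ∀ p q : P, p ∈ K → q ∈ K → ⁅p, q⁆ ∈ N) : Subgroup P where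
  carrier := {p : P | p ∈ K ∧ ∃ n : ℕ, 0 < n ∧ p ^ n ∈ N}
  one_mem' := ⟨K.one_mem, 1, one_pos, by simp [N.one_mem]⟩
  inv_mem' := by
    rintro p ⟨hpK, n, hn, hpn⟩
    exact ⟨K.inv_mem hpK, n, hn, by rw [inv_pow]; exact N.inv_mem hpn⟩
  mul_mem' := by
    rintro p q ⟨hpK, n, hn, hpn⟩ ⟨hqK, m, hm, hqm⟩
    refine ⟨K.mul_mem hpK hqK, n * m, Nat.mul_pos hn hm, ?_⟩
    rw [← QuotientGroup.eq_one_iff] at hpn hqm ⊢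
    have hpn' : ((p : P ⧸ N)) ^ n = 1 := by exact_mod_cast hpn
    have hqm' : ((q : P ⧸ N)) ^ m = 1 := by exact_mod_cast hqm
    have hcomm : Commute ((p : P ⧸ N)) ((q : P ⧸ N)) := by
      rw [← commutatorElement_eq_one_iff_commute]
      show ⁅(QuotientGroup.mk' N) p, (QuotientGroup.mk' N) q⁆ = 1
      rw [← map_commutatorElement]
      exact (QuotientGroup.eq_one_iff _).2 (hc p q hpK hqK)
    calc ((p * q) ^ (n * m) : P ⧸ N)
        = ((p : P ⧸ N) * q) ^ (n * m) := by push_cast; ring_nf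
      _ = (p : P ⧸ N) ^ (n * m) * (q : P ⧸ N) ^ (n * m) := hcomm.mul_pow _
      _ = ((p : P ⧸ N) ^ n) ^ m * ((q : P ⧸ N) ^ m) ^ n := by
          rw [← pow_mul, ← pow_mul, Nat.mul_comm n m]
      _ = 1 := by rw [hpn', hqm', one_pow, one_pow, one_mul]

theorem torsSub_normal {P : Type*} [Group P] (K N : Subgroup P) [hN : N.Normal]
    [hKn : K.Normal] (hc : ∀ p q : P, p ∈ K → q ∈ K → ⁅p, q⁆ ∈ N) :
    (torsSub K N hc).Normal := by
  constructor
  rintro p ⟨hpK, n, hn, hpn⟩ g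
  refine ⟨hKn.conj_mem p hpK g, n, hn, ?_⟩
  rw [conj_pow]
  exact hN.conj_mem _ hpn g

theorem stmt8 {P B : Type*} [Group P] [IsFreeGroup P] [Group B]
    (f : P →* B) (hf : Function.Surjective f) (K : Subgroup P) (hK : f.ker = K) :
    ∃ TP TK : Subgroup P,
      (TP : Set P) = {p : P | ∃ n : ℕ, 0 < n ∧ p ^ n ∈ commutator P} ∧
      (TK : Set P) = {p : P | p ∈ K ∧ ∃ n : ℕ, 0 < n ∧ p ^ n ∈ ⁅K, (⊤ : Subgroup P)⁆} ∧
      TK ≤ K ⊓ TP ∧ (TK.subgroupOf (K ⊓ TP)).Normal := by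
  have hKnorm : K.Normal := hK ▸ f.normal_ker
  have hc1 : ∀ p q : P, p ∈ (⊤ : Subgroup P) → q ∈ (⊤ : Subgroup P) →
      ⁅p, q⁆ ∈ commutator P := fun p q _ _ =>
    Subgroup.commutator_mem_commutator (Subgroup.mem_top p) (Subgroup.mem_top q)
  have hc2 : ∀ p q : P, p ∈ K → q ∈ K → ⁅p, q⁆ ∈ ⁅K, (⊤ : Subgroup P)⁆ :=
    fun p q hp _ => Subgroup.commutator_mem_commutator hp (Subgroup.mem_top q)
  refine ⟨torsSub ⊤ (commutator P) hc1, torsSub K ⁅K, (⊤ : Subgroup P)⁆ hc2, ?_, rfl, ?_, ?_⟩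
  · ext p
    simp [torsSub, Subgroup.mem_top]
  · rintro p ⟨hpK, n, hn, hpn⟩
    exact ⟨hpK, Subgroup.mem_top p, n, hn,
      (Subgroup.commutator_mono le_top le_rfl : ⁅K, (⊤ : Subgroup P)⁆ ≤ commutator P) hpn⟩
  · have := torsSub_normal K ⁅K, (⊤ : Subgroup P)⁆ hc2
    exact this.subgroupOf _
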